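/- Let ρ and σ be density matrices on ℂⁿ with σ positive definite. Then S(ρ|σ) ≤ D(P_ρ|P_σ)(n-1) + log₂ n, where P_ρ and P_σ are the distributions obtained by measuring ρ and σ in an eigenbasis of σ. -/

import Mathlib

open Finset
open scoped ComplexOrder

/-- The base-2 logarithm of a Hermitian matrix via the spectral theorem, with
the convention `log₂ 0 = 0` on eigenvalues. -/
noncomputable def matLogb {n : ℕ} (A : Matrix (Fin n) (Fin n) ℂ)
    (hA : A.IsHermitian) : Matrix (Fin n) (Fin n) ℂ :=
  (hA.eigenvectorUnitary : Matrix (Fin n) (Fin n) ℂ) *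
    Matrix.diagonal (fun i => (Real.logb 2 (hA.eigenvalues i) : ℂ)) *
    star (hA.eigenvectorUnitary : Matrix (Fin n) (Fin n) ℂ)

/-- trace of `M * diagonal (real d)`, real part. -/
lemma aux_trace_mul_diag {n : ℕ} (M : Matrix (Fin n) (Fin n) ℂ) (d : Fin n → ℝ) :
    ((M * Matrix.diagonal (fun i => (d i : ℂ))).trace).re = ∑ i, (M i i).re * d i := by
  rw [Matrix.trace, Complex.re_sum]
  refine Finset.sum_congr rfl fun i _ => ?_
  rw [Matrix.diag_apply, Matrix.mul_diagonal, mul_comm, Complex.re_ofReal_mul, mul_comm]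

/-- trace of `A * (U * D * U*)`, real part. -/
lemma aux_trace_conj_diag {n : ℕ} (A U : Matrix (Fin n) (Fin n) ℂ) (d : Fin n → ℝ) :
    ((A * (U * Matrix.diagonal (fun i => (d i : ℂ)) * star U)).trace).re
      = ∑ i, ((star U * A * U) i i).re * d i := by
  have h1 : A * (U * Matrix.diagonal (fun i => (d i : ℂ)) * star U)
      = (A * U * Matrix.diagonal (fun i => (d i : ℂ))) * star U := by
    simp only [mul_assoc]
  have h2 : star U * (A * U * Matrix.diagonal (fun i => (d i : ℂ)))
      = (star U * A * U) * Matrix.diagonal (fun i => (d i : ℂ)) := by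
    simp only [mul_assoc]
  rw [h1, Matrix.trace_mul_comm, h2]
  exact aux_trace_mul_diag _ d

lemma aux_diag_re_nonneg {n : ℕ} {M : Matrix (Fin n) (Fin n) ℂ} (hM : M.PosSemidef)
    (i : Fin n) : 0 ≤ (M i i).re := by
  have h : 0 ≤ M i i := hM.diag_nonneg
  exact (Complex.le_def.mp h).1

/-- entropy bound -/
lemma aux_entropy {n : ℕ} (P : Fin n → ℝ) (h0 : ∀ i, 0 ≤ P i)
    (h1 : ∑ i, P i = 1) :
    -Real.logb 2 n ≤ ∑ i, P i * Real.logb 2 (P i) := by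
  classical
  set t : Finset (Fin n) := Finset.univ.filter (fun i => P i ≠ 0) with ht
  have hsum : ∑ i ∈ t, P i = 1 := by
    rw [ht, Finset.sum_filter_ne_zero]; exact h1
  have hpos : ∀ i ∈ t, 0 < P i := fun i hi =>
    lt_of_le_of_ne (h0 i) (Ne.symm (Finset.mem_filter.mp hi).2)
  have hcard_pos : 0 < t.card := by
    rcases Finset.eq_empty_or_nonempty t with he | hne
    · rw [he] at hsum; simp at hsum
    · exact Finset.card_pos.mpr hne
  have hj := (strictConcaveOn_log_Ioi.concaveOn).le_map_sum (t := t)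
    (w := P) (p := fun i => (P i)⁻¹)
    (fun i _ => h0 i) hsum (fun i hi => Set.mem_Ioi.mpr (inv_pos.mpr (hpos i hi)))
  have hsum2 : ∑ i ∈ t, P i • (P i)⁻¹ = (t.card : ℝ) := by
    rw [Finset.card_eq_sum_ones t, Nat.cast_sum]
    refine Finset.sum_congr rfl fun i hi => ?_
    simp [smul_eq_mul, mul_inv_cancel₀ (hpos i hi).ne']
  rw [hsum2] at hj
  have hext : ∑ i, P i * Real.log (P i) = ∑ i ∈ t, P i * Real.log (P i) :=
    (Finset.sum_subset (Finset.subset_univ t) (fun i _ hi => by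
      have hPi : P i = 0 := by
        by_contra hc
        exact hi (Finset.mem_filter.mpr ⟨Finset.mem_univ i, hc⟩)
      simp [hPi])).symm
  have hlhs : ∑ i ∈ t, P i • Real.log (P i)⁻¹ = -∑ i, P i * Real.log (P i) := by
    rw [hext, ← Finset.sum_neg_distrib]
    refine Finset.sum_congr rfl fun i _ => ?_
    rw [smul_eq_mul, Real.log_inv, mul_neg]
  rw [hlhs] at hj
  have hlog : Real.log (t.card : ℝ) ≤ Real.log (n : ℝ) := by
    apply Real.log_le_log (by exact_mod_cast hcard_pos)
    exact_mod_cast (Finset.card_le_card (Finset.subset_univ t)).trans_eq (Finset.card_fin n)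
  have hfin : -Real.log (n : ℝ) ≤ ∑ i, P i * Real.log (P i) := by linarith
  have hlog2 : (0 : ℝ) < Real.log 2 := Real.log_pos one_lt_two
  have hconv : ∑ i, P i * Real.logb 2 (P i) = (∑ i, P i * Real.log (P i)) / Real.log 2 := by
    rw [Finset.sum_div]
    exact Finset.sum_congr rfl fun i _ => by rw [Real.logb, mul_div_assoc]
  rw [hconv, Real.logb, ← neg_div]
  gcongr

/-- classical divergence bound -/
lemma aux_classical {n : ℕ} (Pρ Pσ : Fin n → ℝ) (hn : 0 < n)
    (h0 : ∀ i, 0 ≤ Pρ i) (hσ0 : ∀ i, 0 < Pσ i)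
    (h1 : ∑ i, Pρ i = 1) (h2 : ∑ i, Pσ i = 1) :
    ∑ i, Pρ i * Real.logb 2 (Pρ i / Pσ i) ≤
      (⨆ S : Finset (Fin n),
        (∑ i ∈ S, Pρ i) * Real.logb 2 ((∑ i ∈ S, Pρ i) / (∑ i ∈ S, Pσ i))) * ((n : ℝ) - 1) := by
  classical
  set g : Finset (Fin n) → ℝ := fun S =>
    (∑ i ∈ S, Pρ i) * Real.logb 2 ((∑ i ∈ S, Pρ i) / (∑ i ∈ S, Pσ i)) with hg
  have hbdd : BddAbove (Set.range g) := (Set.finite_range g).bddAbove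
  have hD0 : 0 ≤ ⨆ S, g S := by
    have h := le_ciSup hbdd (∅ : Finset (Fin n))
    simpa [hg] using h
  have hA : ∀ i, Pρ i * Real.logb 2 (Pρ i / Pσ i) ≤ ⨆ S, g S := fun i => by
    have h := le_ciSup hbdd ({i} : Finset (Fin n))
    simpa [hg] using h
  set D := ⨆ S, g S with hD
  set T : Finset (Fin n) :=
    Finset.univ.filter (fun i => 0 < Pρ i * Real.logb 2 (Pρ i / Pσ i)) with hT
  have hTne : T ≠ Finset.univ := by
    intro hTu
    have hgt : ∀ i, Pσ i < Pρ i := by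
      intro i
      have hiT : i ∈ T := hTu ▸ Finset.mem_univ i
      have hi : 0 < Pρ i * Real.logb 2 (Pρ i / Pσ i) := (Finset.mem_filter.mp hiT).2
      have hP : 0 < Pρ i := by
        rcases (h0 i).lt_or_eq with h | h
        · exact h
        · exfalso; rw [← h] at hi; simp at hi
      have hlog : 0 < Real.logb 2 (Pρ i / Pσ i) := by
        by_contra hle
        push_neg at hle
        exact absurd hi (not_lt.mpr (mul_nonpos_of_nonneg_of_nonpos (h0 i) hle))
      have hrat : 1 < Pρ i / Pσ i := by
        by_contra hle
        push_neg at hle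
        exact absurd hlog (not_lt.mpr (Real.logb_nonpos one_lt_two (div_nonneg (h0 i) (hσ0 i).le) hle))
      exact (one_lt_div (hσ0 i)).mp hrat
    have hlt : (1 : ℝ) < 1 := by
      calc (1 : ℝ) = ∑ i, Pσ i := h2.symm
        _ < ∑ i, Pρ i :=
          Finset.sum_lt_sum_of_nonempty ⟨⟨0, hn⟩, Finset.mem_univ _⟩ (fun i _ => hgt i)
        _ = 1 := h1
    exact lt_irrefl _ hlt
  have hcardlt : T.card < n := by
    have h := Finset.card_lt_card (Finset.ssubset_univ_iff.mpr hTne)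
    simpa using h
  have hcardR : (T.card : ℝ) ≤ (n : ℝ) - 1 := by
    have : (T.card : ℝ) + 1 ≤ (n : ℝ) := by exact_mod_cast hcardlt
    linarith
  have hsplit :
      ∑ i, Pρ i * Real.logb 2 (Pρ i / Pσ i)
        = ∑ i ∈ T, Pρ i * Real.logb 2 (Pρ i / Pσ i)
          + ∑ i ∈ Finset.univ.filter (fun i => ¬ 0 < Pρ i * Real.logb 2 (Pρ i / Pσ i)),
              Pρ i * Real.logb 2 (Pρ i / Pσ i) :=
    (Finset.sum_filter_add_sum_filter_not _ _ _).symm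
  have hneg : ∑ i ∈ Finset.univ.filter (fun i => ¬ 0 < Pρ i * Real.logb 2 (Pρ i / Pσ i)),
      Pρ i * Real.logb 2 (Pρ i / Pσ i) ≤ 0 :=
    Finset.sum_nonpos fun i hi => not_lt.mp (Finset.mem_filter.mp hi).2
  have hpos : ∑ i ∈ T, Pρ i * Real.logb 2 (Pρ i / Pσ i) ≤ (T.card : ℝ) * D := by
    calc ∑ i ∈ T, Pρ i * Real.logb 2 (Pρ i / Pσ i) ≤ ∑ _i ∈ T, D :=
          Finset.sum_le_sum fun i _ => hA i
      _ = (T.card : ℝ) * D := by rw [Finset.sum_const, nsmul_eq_mul]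
  have hmul : (T.card : ℝ) * D ≤ ((n : ℝ) - 1) * D :=
    mul_le_mul_of_nonneg_right hcardR hD0
  rw [hsplit]
  calc ∑ i ∈ T, Pρ i * Real.logb 2 (Pρ i / Pσ i)
        + ∑ i ∈ Finset.univ.filter (fun i => ¬ 0 < Pρ i * Real.logb 2 (Pρ i / Pσ i)),
            Pρ i * Real.logb 2 (Pρ i / Pσ i)
      ≤ (T.card : ℝ) * D + 0 := add_le_add hpos hneg
    _ ≤ ((n : ℝ) - 1) * D := by linarith
    _ = D * ((n : ℝ) - 1) := mul_comm _ _

/-- Let `ρ`, `σ` be density matrices on `ℂⁿ` with `σ` positive definite, and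
let `P_ρ i = ⟨eᵢ|ρ|eᵢ⟩`, `P_σ i = ⟨eᵢ|σ|eᵢ⟩` be the distributions obtained by
measuring `ρ` and `σ` in the eigenbasis `{eᵢ}` of `σ` (so `P_σ` consists of
the eigenvalues of `σ`). Then
`S(ρ|σ) ≤ D(P_ρ|P_σ) * (n-1) + log₂ n`, where `S(ρ|σ) = Tr(ρ log₂ ρ - ρ log₂ σ)`
is the quantum relative entropy and `D` is the classical divergence. -/
theorem stmt12 (n : ℕ) (ρ σ : Matrix (Fin n) (Fin n) ℂ)
    (hρ : ρ.PosSemidef) (hρ1 : ρ.trace = 1)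
    (hσ : σ.PosDef) (hσ1 : σ.trace = 1)
    (Pρ Pσ : Fin n → ℝ)
    (hPρ : ∀ i, Pρ i =
      ((star (hσ.1.eigenvectorUnitary : Matrix (Fin n) (Fin n) ℂ) * ρ *
        (hσ.1.eigenvectorUnitary : Matrix (Fin n) (Fin n) ℂ)) i i).re)
    (hPσ : ∀ i, Pσ i = hσ.1.eigenvalues i) :
    ((ρ * matLogb ρ hρ.1 - ρ * matLogb σ hσ.1).trace).re ≤
      (⨆ S : Finset (Fin n),
        (∑ i ∈ S, Pρ i) * Real.logb 2 ((∑ i ∈ S, Pρ i) / (∑ i ∈ S, Pσ i))) *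
        ((n : ℝ) - 1) + Real.logb 2 n := by
  classical
  have hn : 0 < n := by
    rcases Nat.eq_zero_or_pos n with h | h
    · subst h
      rw [Matrix.trace] at hρ1
      simp at hρ1
    · exact h
  set U : Matrix (Fin n) (Fin n) ℂ := (hσ.1.eigenvectorUnitary : Matrix (Fin n) (Fin n) ℂ)
    with hU
  set V : Matrix (Fin n) (Fin n) ℂ := (hρ.1.eigenvectorUnitary : Matrix (Fin n) (Fin n) ℂ)
    with hV
  set μ : Fin n → ℝ := hρ.1.eigenvalues with hμ
  -- trace of ρ * matLogb ρ
  have hT1 : ((ρ * matLogb ρ hρ.1).trace).re = ∑ i, μ i * Real.logb 2 (μ i) := by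
    have h := aux_trace_conj_diag ρ V (fun i => Real.logb 2 (μ i))
    rw [show ρ * matLogb ρ hρ.1
        = ρ * (V * Matrix.diagonal (fun i => ((Real.logb 2 (μ i) : ℝ) : ℂ)) * star V) from by
      rw [matLogb]] at *
    rw [h, show star V * ρ * V = Matrix.diagonal (RCLike.ofReal ∘ μ) from by
      simpa using hρ.1.conjStarAlgAut_star_eigenvectorUnitary]
    refine Finset.sum_congr rfl fun i _ => ?_
    simp [Matrix.diagonal_apply_eq, Function.comp]
  -- trace of ρ * matLogb σ
  have hT2 : ((ρ * matLogb σ hσ.1).trace).re = ∑ i, Pρ i * Real.logb 2 (Pσ i) := by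
    have h := aux_trace_conj_diag ρ U (fun i => Real.logb 2 (hσ.1.eigenvalues i))
    rw [show ρ * matLogb σ hσ.1
        = ρ * (U * Matrix.diagonal (fun i => ((Real.logb 2 (hσ.1.eigenvalues i) : ℝ) : ℂ))
          * star U) from by rw [matLogb]] at *
    rw [h]
    refine Finset.sum_congr rfl fun i _ => ?_
    rw [hPρ i, hPσ i]
  -- Pρ is nonneg
  have hPρ0 : ∀ i, 0 ≤ Pρ i := by
    intro i
    rw [hPρ i]
    have hpsd : (star U * ρ * U).PosSemidef := by
      simpa [Matrix.star_eq_conjTranspose] using hρ.conjTranspose_mul_mul_same U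
    exact aux_diag_re_nonneg hpsd i
  -- Pσ is positive
  have hPσ0 : ∀ i, 0 < Pσ i := fun i => (hPσ i) ▸ hσ.eigenvalues_pos i
  -- sum of Pρ = 1
  have hPρ1 : ∑ i, Pρ i = 1 := by
    have htr : (star U * ρ * U).trace = ρ.trace := by
      rw [Matrix.trace_mul_cycle, Matrix.mem_unitaryGroup_iff.mp hσ.1.eigenvectorUnitary.2,
        one_mul]
    calc ∑ i, Pρ i = ((star U * ρ * U).trace).re := by
          rw [Matrix.trace, Complex.re_sum]
          exact Finset.sum_congr rfl fun i _ => (hPρ i)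
      _ = 1 := by rw [htr, hρ1]; simp
  -- sum of Pσ = 1
  have hPσ1 : ∑ i, Pσ i = 1 := by
    have hst := hσ.1.spectral_theorem
    have htr : σ.trace = (Matrix.diagonal (RCLike.ofReal ∘ hσ.1.eigenvalues)).trace := by
      conv_lhs => rw [hst]
      rw [Unitary.conjStarAlgAut_apply, Matrix.trace_mul_cycle,
        Matrix.mem_unitaryGroup_iff'.mp hσ.1.eigenvectorUnitary.2, one_mul]
    have : (σ.trace).re = ∑ i, hσ.1.eigenvalues i := by
      rw [htr, Matrix.trace, Complex.re_sum]
      refine Finset.sum_congr rfl fun i _ => ?_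
      simp [Matrix.diag_apply, Matrix.diagonal_apply_eq, Function.comp]
    rw [hσ1] at this
    simp only [Complex.one_re] at this
    rw [show (∑ i, Pσ i) = ∑ i, hσ.1.eigenvalues i from
      Finset.sum_congr rfl fun i _ => hPσ i]
    exact this.symm
  -- eigenvalues of ρ : nonneg, sum 1
  have hμ0 : ∀ i, 0 ≤ μ i := fun i => hρ.eigenvalues_nonneg i
  have hμ1 : ∑ i, μ i = 1 := by
    have hst := hρ.1.spectral_theorem
    have htr : ρ.trace = (Matrix.diagonal (RCLike.ofReal ∘ hρ.1.eigenvalues)).trace := by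
      conv_lhs => rw [hst]
      rw [Unitary.conjStarAlgAut_apply, Matrix.trace_mul_cycle,
        Matrix.mem_unitaryGroup_iff'.mp hρ.1.eigenvectorUnitary.2, one_mul]
    have : (ρ.trace).re = ∑ i, μ i := by
      rw [htr, Matrix.trace, Complex.re_sum]
      refine Finset.sum_congr rfl fun i _ => ?_
      simp [Matrix.diag_apply, Matrix.diagonal_apply_eq, Function.comp, hμ]
    rw [hρ1] at this
    simpa using this.symm
  have hμle1 : ∀ i, μ i ≤ 1 := by
    intro i
    rw [← hμ1]
    exact Finset.single_le_sum (fun j _ => hμ0 j) (Finset.mem_univ i)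
  -- first term nonpositive
  have hT1le : ∑ i, μ i * Real.logb 2 (μ i) ≤ 0 :=
    Finset.sum_nonpos fun i _ =>
      mul_nonpos_of_nonneg_of_nonpos (hμ0 i)
        (Real.logb_nonpos one_lt_two (hμ0 i) (hμle1 i))
  -- pointwise log identity
  have hkey : ∀ i, -(Pρ i * Real.logb 2 (Pσ i))
      = Pρ i * Real.logb 2 (Pρ i / Pσ i) - Pρ i * Real.logb 2 (Pρ i) := by
    intro i
    rcases eq_or_ne (Pρ i) 0 with h | h
    · simp [h]
    · rw [Real.logb_div h (hPσ0 i).ne']; ring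
  have hsplit : -(∑ i, Pρ i * Real.logb 2 (Pσ i))
      = (∑ i, Pρ i * Real.logb 2 (Pρ i / Pσ i)) - ∑ i, Pρ i * Real.logb 2 (Pρ i) := by
    rw [← Finset.sum_neg_distrib, ← Finset.sum_sub_distrib]
    exact Finset.sum_congr rfl fun i _ => hkey i
  have hcl := aux_classical Pρ Pσ hn hPρ0 hPσ0 hPρ1 hPσ1
  have hent := aux_entropy Pρ hPρ0 hPρ1
  rw [Matrix.trace_sub, Complex.sub_re, hT1, hT2]
  linarith
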